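/- If λ^{(1)},…,λ^{(m)} are pairwise distinct points of the open unit ball of ℂⁿ, then the vectors z_{λ^{(1)}},…,z_{λ^{(m)}} in ℓ²(F_n^+) are linearly independent. -/

import Mathlib

open scoped ComplexConjugate

/-- If `λ⁽¹⁾,…,λ⁽ᵐ⁾` are pairwise distinct points of the open unit ball of `ℂⁿ`, then the
vectors `z_{λ⁽ʲ⁾} ∈ ℓ²(F_n^+)` with coordinates `conj (λ⁽ʲ⁾)_α` are linearly independent. -/
theorem stmt1 (n m : ℕ) (lam : Fin m → EuclideanSpace ℂ (Fin n))
    (hball : ∀ j, ‖lam j‖ < 1) (hdist : Function.Injective lam)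
    (z : Fin m → lp (fun _ : List (Fin n) => ℂ) 2)
    (hz : ∀ j (α : List (Fin n)), z j α = conj ((α.map fun i => lam j i).prod)) :
    LinearIndependent ℂ z := by
  rw [Fintype.linearIndependent_iff]
  intro c hc j0
  set μ : Fin m → Fin n → ℂ := fun j i => conj (lam j i) with hμ
  have key : ∀ α : List (Fin n), ∑ j, c j * (α.map (μ j)).prod = 0 := by
    intro α
    have h1 : (↑(∑ j, c j • z j) : ∀ _ : List (Fin n), ℂ) α = 0 := by
      rw [hc]; rfl
    rw [lp.coeFn_sum] at h1
    simp only [Finset.sum_apply, lp.coeFn_smul, Pi.smul_apply, smul_eq_mul, hz] at h1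
    rw [← h1]
    congr 1
    ext j
    congr 1
    rw [map_list_prod (starRingEnd ℂ), List.map_map]
    rfl
  have hconj_ne : ∀ j k i, lam j i ≠ lam k i → μ j i ≠ μ k i := by
    intro j k i hne h
    exact hne ((starRingEnd ℂ).injective h)
  by_cases hn : n = 0
  · subst hn
    have hsub : Subsingleton (Fin m) :=
      ⟨fun a b => hdist (Subsingleton.elim _ _)⟩
    have h0 := key []
    simp only [List.map_nil, List.prod_nil, mul_one] at h0
    rwa [Fintype.sum_subsingleton _ j0] at h0
  · have : NeZero n := ⟨hn⟩
    have hex : ∀ k, k ≠ j0 → ∃ i, lam j0 i ≠ lam k i := by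
      intro k hk
      by_contra h
      push_neg at h
      exact hk (hdist (PiLp.ext h)).symm
    set idx : Fin m → Fin n := fun k =>
      if h : k = j0 then default else Classical.choose (hex k h) with hidx
    have hidx_ne : ∀ k, k ≠ j0 → μ j0 (idx k) ≠ μ k (idx k) := by
      intro k hk
      apply hconj_ne
      have h1 : idx k = Classical.choose (hex k hk) := by
        rw [hidx]; exact dif_neg hk
      rw [h1]
      exact Classical.choose_spec (hex k hk)
    set T : Finset (Fin m) := Finset.univ.erase j0 with hT
    have main : ∑ j, c j * ∏ k ∈ T, (μ j (idx k) - μ k (idx k)) = 0 := by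
      have expand : ∀ j, ∏ k ∈ T, (μ j (idx k) - μ k (idx k)) =
          ∑ S ∈ T.powerset, (∏ k ∈ S, μ j (idx k)) * ∏ k ∈ T \ S, (-μ k (idx k)) := by
        intro j
        have := Finset.prod_add (fun k => μ j (idx k)) (fun k => -μ k (idx k)) T
        simpa [sub_eq_add_neg] using this
      calc ∑ j, c j * ∏ k ∈ T, (μ j (idx k) - μ k (idx k))
          = ∑ j, ∑ S ∈ T.powerset,
              (c j * ∏ k ∈ S, μ j (idx k)) * ∏ k ∈ T \ S, (-μ k (idx k)) := by
            refine Finset.sum_congr rfl fun j _ => ?_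
            rw [expand j, Finset.mul_sum]
            refine Finset.sum_congr rfl fun S _ => by ring
        _ = ∑ S ∈ T.powerset,
              (∑ j, c j * ∏ k ∈ S, μ j (idx k)) * ∏ k ∈ T \ S, (-μ k (idx k)) := by
            rw [Finset.sum_comm]
            exact Finset.sum_congr rfl fun S _ => by rw [Finset.sum_mul]
        _ = 0 := by
            refine Finset.sum_eq_zero fun S _ => ?_
            have hS : ∑ j, c j * ∏ k ∈ S, μ j (idx k) = 0 := by
              have := key (S.toList.map idx)
              simpa [List.map_map, Finset.prod_map_toList] using this
            rw [hS, zero_mul]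
    have hsingle : ∑ j, c j * ∏ k ∈ T, (μ j (idx k) - μ k (idx k)) =
        c j0 * ∏ k ∈ T, (μ j0 (idx k) - μ k (idx k)) := by
      refine Finset.sum_eq_single j0 (fun j _ hj => ?_) (fun h => absurd (Finset.mem_univ j0) h)
      have : (∏ k ∈ T, (μ j (idx k) - μ k (idx k))) = 0 := by
        refine Finset.prod_eq_zero (i := j) ?_ (by ring)
        simp [hT, hj]
      rw [this, mul_zero]
    rw [hsingle] at main
    have hprod : (∏ k ∈ T, (μ j0 (idx k) - μ k (idx k))) ≠ 0 := by
      refine Finset.prod_ne_zero_iff.mpr fun k hk => ?_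
      have hk' : k ≠ j0 := (Finset.mem_erase.mp hk).1
      exact sub_ne_zero_of_ne (hidx_ne k hk')
    exact (mul_eq_zero.mp main).resolve_right hprod
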